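/- Let X be a real reflexive Banach space, F: X → X* single-valued and monotone, A: X ⇉ X* monotone, and suppose T_A = (A+F)^{-1}F is single-valued on a set C ⊆ X. Then T_A is F-firmly nonexpansive on C: for all x, y ∈ C, ⟨T_A x − T_A y, F(T_A x) − F(T_A y)⟩ ≤ ⟨T_A x − T_A y, Fx − Fy⟩. -/

import Mathlib

open NormedSpace

/-- If `A` and `F` are monotone and the `F`-resolvent `T_A = (A+F)⁻¹F` is single-valued
on `C` (here `T` is the selection, characterized by `F x − F(T x) ∈ A (T x)`), then `T_A`
is `F`-firmly nonexpansive on `C`. -/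
theorem stmt_3 {X : Type*} [NormedAddCommGroup X] [NormedSpace ℝ X] [CompleteSpace X]
    (hrefl : Function.Surjective (inclusionInDoubleDual ℝ X))
    (A : X → Set (StrongDual ℝ X)) (F : X → StrongDual ℝ X)
    (hA : ∀ x y (x' y' : StrongDual ℝ X), x' ∈ A x → y' ∈ A y → 0 ≤ (x' - y') (x - y))
    (hF : ∀ a b : X, 0 ≤ (F a - F b) (a - b))
    (C : Set X) (T : X → X)
    (hT : ∀ x ∈ C, F x - F (T x) ∈ A (T x)) :
    ∀ x ∈ C, ∀ y ∈ C,
      (F (T x) - F (T y)) (T x - T y) ≤ (F x - F y) (T x - T y) := by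
  intro x hx y hy
  have h := hA (T x) (T y) (F x - F (T x)) (F y - F (T y)) (hT x hx) (hT y hy)
  simp only [ContinuousLinearMap.sub_apply] at *
  linarith
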